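/- Let H, Y be Hilbert spaces, A : H → Y bounded linear, and suppose u₁ minimizes ‖Av − b₁‖² + ε‖v‖² and u₂ minimizes ‖Av − b₂‖² + ε‖v‖². Then ‖A(u₁ − u₂)‖² + ε‖u₁ − u₂‖² ≤ ‖b₁ − b₂‖·‖A(u₁ − u₂)‖, and consequently ‖A(u₁−u₂)‖² + 2ε‖u₁−u₂‖² ≤ ‖b₁ − b₂‖². -/

import Mathlib

lemma varid {H Y : Type*}
    [NormedAddCommGroup H] [InnerProductSpace ℝ H]
    [NormedAddCommGroup Y] [InnerProductSpace ℝ Y]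
    (A : H →L[ℝ] Y) (b : Y) (ε : ℝ) (hε : 0 ≤ ε) (u : H)
    (h : ∀ v : H, ‖A u - b‖^2 + ε * ‖u‖^2 ≤ ‖A v - b‖^2 + ε * ‖v‖^2) (φ : H) :
    (inner ℝ (A u - b) (A φ) : ℝ) + ε * inner ℝ u φ = 0 := by
  set L : ℝ := (inner ℝ (A u - b) (A φ) : ℝ) + ε * inner ℝ u φ with hL
  set C : ℝ := ‖A φ‖^2 + ε * ‖φ‖^2 with hC
  have key : ∀ t : ℝ, 0 ≤ 2*t*L + t^2*C := by
    intro t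
    have h' := h (u + t • φ)
    have e1 : A (u + t • φ) - b = (A u - b) + t • (A φ) := by
      simp [map_add, map_smul]; abel
    have e2 : ‖(A u - b) + t • A φ‖^2
        = ‖A u - b‖^2 + 2*(t * inner ℝ (A u - b) (A φ)) + t^2*‖A φ‖^2 := by
      rw [@norm_add_sq_real, real_inner_smul_right, norm_smul]
      simp [mul_pow, sq_abs]
    have e3 : ‖u + t • φ‖^2 = ‖u‖^2 + 2*(t * inner ℝ u φ) + t^2*‖φ‖^2 := by
      rw [@norm_add_sq_real, real_inner_smul_right, norm_smul]
      simp [mul_pow, sq_abs]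
    rw [e1, e2, e3] at h'
    simp only [hL, hC]
    nlinarith [h']
  have hCpos : (0:ℝ) ≤ C := by positivity
  have hC1 : (0:ℝ) < C + 1 := by linarith
  have k2 := mul_nonneg (key (-L/(C+1))) (sq_nonneg (C+1))
  have e : (2*(-L/(C+1))*L + (-L/(C+1))^2*C) * (C+1)^2 = -(L^2)*(C+2) := by
    field_simp; ring
  rw [e] at k2
  have hL2 : L^2 = 0 := by nlinarith [sq_nonneg L]
  exact pow_eq_zero_iff (by norm_num) |>.mp hL2

theorem stmt_16 {H Y : Type*}
    [NormedAddCommGroup H] [InnerProductSpace ℝ H] [CompleteSpace H]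
    [NormedAddCommGroup Y] [InnerProductSpace ℝ Y] [CompleteSpace Y]
    (A : H →L[ℝ] Y) (b₁ b₂ : Y) (ε : ℝ) (hε : 0 < ε) (u₁ u₂ : H)
    (h₁ : ∀ v : H, ‖A u₁ - b₁‖^2 + ε * ‖u₁‖^2 ≤ ‖A v - b₁‖^2 + ε * ‖v‖^2)
    (h₂ : ∀ v : H, ‖A u₂ - b₂‖^2 + ε * ‖u₂‖^2 ≤ ‖A v - b₂‖^2 + ε * ‖v‖^2) :
    ‖A (u₁ - u₂)‖^2 + ε * ‖u₁ - u₂‖^2 ≤ ‖b₁ - b₂‖ * ‖A (u₁ - u₂)‖ ∧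
      ‖A (u₁ - u₂)‖^2 + 2 * ε * ‖u₁ - u₂‖^2 ≤ ‖b₁ - b₂‖^2 := by
  set w := u₁ - u₂ with hw
  have v1 := varid A b₁ ε hε.le u₁ h₁ w
  have v2 := varid A b₂ ε hε.le u₂ h₂ w
  have key : ‖A w‖^2 + ε * ‖w‖^2 = (inner ℝ (b₁ - b₂) (A w) : ℝ) := by
    have eA : (A u₁ - b₁) - (A u₂ - b₂) = A w - (b₁ - b₂) := by
      simp [hw, map_sub]; abel
    have sub : (inner ℝ (A w - (b₁ - b₂)) (A w) : ℝ) + ε * inner ℝ w w = 0 := by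
      rw [← eA]
      have : (inner ℝ ((A u₁ - b₁) - (A u₂ - b₂)) (A w) : ℝ)
          = inner ℝ (A u₁ - b₁) (A w) - inner ℝ (A u₂ - b₂) (A w) := inner_sub_left _ _ _
      rw [this]
      have hi : (inner ℝ w w : ℝ) = inner ℝ u₁ w - inner ℝ u₂ w := by
        rw [← inner_sub_left]
      rw [hi]; linarith [v1, v2]
    rw [inner_sub_left, real_inner_self_eq_norm_sq, real_inner_self_eq_norm_sq] at sub
    linarith
  have cs : (inner ℝ (b₁ - b₂) (A w) : ℝ) ≤ ‖b₁ - b₂‖ * ‖A w‖ := real_inner_le_norm _ _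
  constructor
  · linarith [key]
  · nlinarith [key, cs, sq_nonneg (‖b₁ - b₂‖ - ‖A w‖)]
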